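/- The skew group algebra ℂ[u^{±1},v^{±1}]⋊Γ is isomorphic, as a ℂ-algebra, to the algebra M_d(ℂ[s^{±1},t^{±1}]) of d×d matrices over the Laurent polynomial ring in two variables ℂ[s^{±1},t^{±1}]. -/

import Mathlib

/-!
STATEMENT 10: The skew group algebra `ℂ[u^{±1}, v^{±1}] ⋊ Γ` (with `Γ = ℤ/dℤ` acting by
`ξ(u) = ζu`, `ξ(v) = ζ⁻¹v` for a primitive `d`-th root of unity `ζ`) is isomorphic, as a
ℂ-algebra, to the algebra `M_d(ℂ[s^{±1}, t^{±1}])` of `d × d` matrices over the Laurent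
polynomial ring in two variables (formalized as iterated Laurent polynomials).

The skew group algebra is formalized abstractly: any ℂ-algebra with a ℂ-basis
`b a b' c` (representing `u^a v^{b'} ξ^c`) satisfying the multiplication rule
`(u^a v^b ξ^c)·(u^e v^f ξ^g) = ζ^{c(e−f)} u^{a+e} v^{b+f} ξ^{c+g}`.
-/

/-- Data exhibiting `A` as the skew group algebra `ℂ[u^{±1}, v^{±1}] ⋊ (ℤ/dℤ)`,
where `b a b' c` represents the basis element `u^a v^{b'} ξ^c`. -/
structure SkewLaurent2Algebra (d : ℕ) (ζ : ℂ) (A : Type) [Ring A] [Algebra ℂ A] where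
  b : ℤ → ℤ → ZMod d → A
  basis : Module.Basis (ℤ × ℤ × ZMod d) ℂ A
  basis_eq : ∀ (a b' : ℤ) (c : ZMod d), basis (a, b', c) = b a b' c
  b_one : b 0 0 0 = 1
  b_mul : ∀ (a b' : ℤ) (c : ZMod d) (e f : ℤ) (g : ZMod d),
    b a b' c * b e f g = (ζ ^ ((c.val : ℤ) * (e - f))) • b (a + e) (b' + f) (c + g)

open LaurentPolynomial
noncomputable section
namespace Stmt10Aux

abbrev Rp := LaurentPolynomial ℂ
abbrev Rr := LaurentPolynomial Rp

noncomputable def b1 : Module.Basis ℤ ℂ Rp := AddMonoidAlgebra.basis ℤ ℂ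
noncomputable def b2 : Module.Basis ℤ Rp Rr := AddMonoidAlgebra.basis ℤ Rp
noncomputable def bR : Module.Basis (ℤ × ℤ) ℂ Rr := b1.smulTower b2

lemma bR_apply (m n : ℤ) : bR (m, n) = C (T m) * T n := by
  rw [bR, Module.Basis.smulTower_apply]
  show (T m : Rp) • (T n : Rr) = _
  rw [Algebra.smul_def]; rfl

lemma bR_mul (m n m' n' : ℤ) : bR (m, n) * bR (m', n') = bR (m + m', n + n') := by
  simp only [bR_apply, T_add, map_mul]
  ring

lemma bR_one : bR (0, 0) = 1 := by
  rw [bR_apply]; simp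

variable (d : ℕ) [NeZero d]

lemma dpos : 0 < d := Nat.pos_of_ne_zero (NeZero.ne d)

def fm (z : ℤ) : Fin d :=
  ⟨(z % (d : ℤ)).toNat, by
    have h1 : 0 ≤ z % (d : ℤ) := Int.emod_nonneg z (by exact_mod_cast (dpos d).ne')
    have h2 : z % (d : ℤ) < d := Int.emod_lt_of_pos z (by exact_mod_cast dpos d)
    omega⟩

def fq (z : ℤ) : ℤ := z / (d : ℤ)

lemma fm_coe (z : ℤ) : ((fm d z : ℕ) : ℤ) = z % (d : ℤ) := by
  have h1 : 0 ≤ z % (d : ℤ) := Int.emod_nonneg z (by exact_mod_cast (dpos d).ne')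
  simp [fm, Int.toNat_of_nonneg h1]

lemma fmfq (z : ℤ) : (d : ℤ) * fq d z + (fm d z : ℤ) = z := by
  rw [fm_coe, fq]; exact Int.mul_ediv_add_emod z d

lemma fm_congr {x y : ℤ} (h : (d : ℤ) ∣ x - y) : fm d x = fm d y := by
  have : x % (d : ℤ) = y % (d : ℤ) := Int.emod_emod_of_dvd _ (dvd_refl _) ▸ by
    rw [Int.emod_emod_of_dvd]
    · exact (Int.emod_eq_emod_iff_emod_sub_eq_zero).mpr (Int.emod_eq_zero_of_dvd h)
    · exact dvd_refl _
  apply Fin.ext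
  have := fm_coe d x; have := fm_coe d y
  omega

lemma fm_fin_add (r : Fin d) (n : ℤ) : fm d ((r : ℤ) + d * n) = r := by
  apply Fin.ext
  have h : ((r : ℤ) + d * n) % d = (r : ℤ) := by
    rw [Int.add_mul_emod_self_left]
    exact Int.emod_eq_of_lt (by positivity) (by exact_mod_cast r.isLt)
  have := fm_coe d ((r : ℤ) + d * n)
  omega

lemma fq_fin_add (r : Fin d) (n : ℤ) : fq d ((r : ℤ) + d * n) = n := by
  have h1 := fmfq d ((r : ℤ) + d * n)
  rw [fm_fin_add] at h1
  have hd : (0:ℤ) < d := by exact_mod_cast dpos d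
  have : (d:ℤ) * fq d ((r:ℤ) + d*n) = d * n := by omega
  exact mul_left_cancel₀ hd.ne' this

lemma fm_shift (x y : ℤ) : fm d (x + (fm d y : ℤ)) = fm d (x + y) := by
  apply fm_congr
  have := fmfq d y
  exact ⟨-(fq d y), by linarith⟩

lemma fq_shift (x y : ℤ) : fq d (x + (fm d y : ℤ)) + fq d y = fq d (x + y) := by
  have hd : (0:ℤ) < d := by exact_mod_cast dpos d
  apply mul_left_cancel₀ hd.ne'
  have h1 := fmfq d (x + (fm d y : ℤ))
  have h2 := fmfq d y
  have h3 := fmfq d (x + y)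
  have h4 := fm_shift d x y
  rw [h4] at h1
  ring_nf
  ring_nf at h1 h2 h3
  linarith


variable (ζ : ℂ)

lemma zpow_congr (hζ : IsPrimitiveRoot ζ d) {x y : ℤ} (h : (d:ℤ) ∣ x - y) :
    ζ ^ x = ζ ^ y := by
  have hne : ζ ≠ 0 := hζ.ne_zero (NeZero.ne d)
  have h1 : ζ ^ (x - y) = 1 := (hζ.zpow_eq_one_iff_dvd _).mpr h
  calc ζ ^ x = ζ ^ (y + (x - y)) := by ring_nf
    _ = ζ ^ y * ζ ^ (x - y) := zpow_add₀ hne y (x - y)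
    _ = ζ ^ y := by rw [h1, mul_one]

lemma ortho (hζ : IsPrimitiveRoot ζ d) (x : ℤ) :
    ∑ r : Fin d, ζ ^ (x * (r : ℤ)) = if (d:ℤ) ∣ x then (d : ℂ) else 0 := by
  have hne : ζ ≠ 0 := hζ.ne_zero (NeZero.ne d)
  have hw : ∀ r : Fin d, ζ ^ (x * (r : ℤ)) = (ζ ^ x) ^ (r : ℕ) := by
    intro r
    rw [zpow_mul, zpow_natCast]
  simp only [hw]
  rw [Fin.sum_univ_eq_sum_range (fun i => (ζ ^ x) ^ i)]
  by_cases h : (d:ℤ) ∣ x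
  · have : ζ ^ x = 1 := (hζ.zpow_eq_one_iff_dvd _).mpr h
    simp [this, if_pos h]
  · have hne1 : ζ ^ x ≠ 1 := fun hc => h ((hζ.zpow_eq_one_iff_dvd _).mp hc)
    rw [geom_sum_eq hne1]
    have : (ζ ^ x) ^ d = 1 := by
      rw [← zpow_natCast, ← zpow_mul, mul_comm, zpow_mul, zpow_natCast, hζ.pow_eq_one,
        one_zpow]
    rw [if_neg h, this, sub_self, zero_div]

/-- The matrix associated to the basis element `u^a v^b ξ^c`. -/
noncomputable def Mat (a b : ℤ) (c : ZMod d) : Matrix (Fin d) (Fin d) Rr :=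
  ∑ r : Fin d, ζ ^ ((c.val : ℤ) * (r : ℤ)) •
    Matrix.single (fm d (a - b + r)) r (bR (b, fq d (a - b + r)))


lemma Mat_mul (hζ : IsPrimitiveRoot ζ d) (a b : ℤ) (c : ZMod d) (e f : ℤ) (g : ZMod d) :
    Mat d ζ a b c * Mat d ζ e f g
      = ζ ^ ((c.val : ℤ) * (e - f)) • Mat d ζ (a + e) (b + f) (c + g) := by
  have hne : ζ ≠ 0 := hζ.ne_zero (NeZero.ne d)
  rw [Mat, Mat, Mat, Finset.smul_sum, Finset.sum_mul_sum]
  rw [Finset.sum_comm]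
  refine Finset.sum_congr rfl fun r' _ => ?_
  -- inner sum over r collapses at r = fm d (e - f + r')
  rw [Finset.sum_eq_single (fm d (e - f + (r' : ℤ)))]
  · rw [smul_mul_smul_comm, Matrix.single_mul_single_same, smul_smul]
    -- identify indices, entries, scalars
    have hidx : fm d (a - b + (fm d (e - f + (r' : ℤ)) : ℤ)) = fm d (a + e - (b + f) + (r' : ℤ)) := by
      rw [fm_shift]
      congr 1; ring
    have hentry : bR (b, fq d (a - b + (fm d (e - f + (r' : ℤ)) : ℤ))) * bR (f, fq d (e - f + (r' : ℤ)))
        = bR (b + f, fq d (a + e - (b + f) + (r' : ℤ))) := by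
      rw [bR_mul]
      congr 2
      rw [fq_shift]
      congr 1; ring
    have hq : (c.val : ℤ) + (g.val : ℤ) - (((c + g).val : ℤ)) = d * ((c.val + g.val) / d : ℕ) := by
      have h2 : (c + g).val = (c.val + g.val) % d := ZMod.val_add c g
      have hn : c.val + g.val = d * ((c.val + g.val) / d) + (c + g).val := by
        rw [h2]; exact (Nat.div_add_mod _ _).symm
      have hz := congrArg (Nat.cast : ℕ → ℤ) hn
      rw [Nat.cast_add, Nat.cast_add, Nat.cast_mul] at hz
      linarith
    have hscal : ζ ^ ((c.val : ℤ) * ((fm d (e - f + (r' : ℤ)) : ℤ))) * ζ ^ ((g.val : ℤ) * (r' : ℤ))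
        = ζ ^ ((c.val : ℤ) * (e - f)) * ζ ^ (((c + g).val : ℤ) * (r' : ℤ)) := by
      rw [← zpow_add₀ hne, ← zpow_add₀ hne]
      apply zpow_congr d ζ hζ
      have h1 := fmfq d (e - f + (r' : ℤ))
      refine ⟨((c.val + g.val) / d : ℕ) * (r' : ℤ) - (c.val : ℤ) * fq d (e - f + (r' : ℤ)), ?_⟩
      have : ((fm d (e - f + (r' : ℤ)) : ℕ) : ℤ) = (e - f + (r' : ℤ)) - d * fq d (e - f + (r' : ℤ)) := by
        linarith
      rw [this]
      linear_combination (r' : ℤ) * hq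
    rw [hidx, hentry, hscal]
  · intro r _ hr
    rw [smul_mul_smul_comm, Matrix.single_mul_single_of_ne (h := hr)]
    exact smul_zero _
  · intro h
    exact absurd (Finset.mem_univ _) h

lemma Mat_one : Mat d ζ 0 0 0 = 1 := by
  rw [Mat]
  have h1 : ∀ r : Fin d, (0 : ℤ) - 0 + (r : ℤ) = ((r : ℤ) + d * 0) := by intro r; ring
  have hfm : ∀ r : Fin d, fm d ((0:ℤ) - 0 + (r : ℤ)) = r := by
    intro r; rw [h1 r, fm_fin_add]
  have hfq : ∀ r : Fin d, fq d ((0:ℤ) - 0 + (r : ℤ)) = 0 := by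
    intro r; rw [h1 r, fq_fin_add]
  have hz : ((0 : ZMod d).val : ℤ) = 0 := by simp [ZMod.val_zero]
  refine Matrix.ext fun i j => ?_
  rw [Matrix.sum_apply]
  simp only [hfm, hfq, hz, zero_mul, zpow_zero, one_smul, bR_one]
  by_cases h : i = j
  · subst h
    rw [Matrix.one_apply_eq]
    rw [Finset.sum_eq_single i]
    · simp
    · intro r _ hr
      exact Matrix.single_apply_of_ne _ _ _ _ _ (by tauto)
    · intro h; exact absurd (Finset.mem_univ _) h
  · rw [Matrix.one_apply_ne h]
    apply Finset.sum_eq_zero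
    intro r _
    exact Matrix.single_apply_of_ne _ _ _ _ _ (by rintro ⟨rfl, rfl⟩; exact h rfl)


lemma orthoZ (hζ : IsPrimitiveRoot ζ d) (x : ℤ) :
    ∑ c : ZMod d, ζ ^ (x * (c.val : ℤ)) = if (d:ℤ) ∣ x then (d : ℂ) else 0 := by
  rw [← ortho d ζ hζ x]
  refine (Fintype.sum_bijective (fun r : Fin d => ((r : ℕ) : ZMod d)) ?_ _ _ ?_).symm
  · refine (Fintype.bijective_iff_injective_and_card _).mpr ⟨?_, by simp [ZMod.card]⟩
    intro r r' h
    have h1 := ZMod.val_cast_of_lt r.isLt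
    have h2 := ZMod.val_cast_of_lt r'.isLt
    simp only at h
    apply Fin.ext
    rw [← h1, ← h2, h]
  · intro r
    rw [ZMod.val_cast_of_lt r.isLt]

variable {A : Type} [Ring A] [Algebra ℂ A]

noncomputable def bM : Module.Basis (Fin d × Fin d × (ℤ × ℤ)) ℂ (Matrix (Fin d) (Fin d) Rr) :=
  bR.matrix _ _

noncomputable def phi (S : SkewLaurent2Algebra d ζ A) : A →ₗ[ℂ] Matrix (Fin d) (Fin d) Rr :=
  S.basis.constr ℂ fun p => Mat d ζ p.1 p.2.1 p.2.2

noncomputable def psi (S : SkewLaurent2Algebra d ζ A) : Matrix (Fin d) (Fin d) Rr →ₗ[ℂ] A :=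
  (bM d).constr ℂ fun p => (d : ℂ)⁻¹ • ∑ cc : ZMod d,
    ζ ^ (-((p.2.1 : ℕ) : ℤ) * (cc.val : ℤ)) •
      S.b (((p.1 : ℕ) : ℤ) - ((p.2.1 : ℕ) : ℤ) + d * p.2.2.2 + p.2.2.1) p.2.2.1 cc

lemma dvd_iff_eq {c g : ZMod d} : (d:ℤ) ∣ ((c.val : ℤ) - (g.val : ℤ)) ↔ g = c := by
  constructor
  · intro h
    have h0 : ((c.val : ℤ) - (g.val : ℤ)) = 0 := by
      refine Int.eq_zero_of_abs_lt_dvd h ?_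
      have := ZMod.val_lt c
      have := ZMod.val_lt g
      rw [abs_lt]
      constructor <;> omega
    have : c.val = g.val := by omega
    exact (ZMod.val_injective d this).symm
  · rintro rfl; simp

lemma psi_Mat (hζ : IsPrimitiveRoot ζ d) (S : SkewLaurent2Algebra d ζ A) (a b : ℤ) (c : ZMod d) :
    psi d ζ S (Mat d ζ a b c) = S.b a b c := by
  have hne : ζ ≠ 0 := hζ.ne_zero (NeZero.ne d)
  have hdC : (d : ℂ) ≠ 0 := Nat.cast_ne_zero.mpr (NeZero.ne d)
  have hXa : ∀ r : Fin d, ((fm d (a - b + (r:ℤ)) : ℕ) : ℤ) - (r:ℤ) + d * fq d (a - b + (r:ℤ)) + b = a := by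
    intro r; have := fmfq d (a - b + (r:ℤ)); linarith
  rw [Mat, map_sum]
  have step1 : ∀ r : Fin d,
      psi d ζ S (ζ ^ ((c.val : ℤ) * (r : ℤ)) •
        Matrix.single (fm d (a - b + (r:ℤ))) r (bR (b, fq d (a - b + (r:ℤ)))))
      = ∑ g : ZMod d, ((d:ℂ)⁻¹ * ζ ^ (((c.val:ℤ) - (g.val:ℤ)) * (r:ℤ))) • S.b a b g := by
    intro r
    rw [map_smul]
    have hb : Matrix.single (fm d (a - b + (r:ℤ))) r (bR (b, fq d (a - b + (r:ℤ))))
        = bM d (fm d (a - b + (r:ℤ)), r, (b, fq d (a - b + (r:ℤ)))) := by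
      rw [bM, Module.Basis.matrix_apply]
    rw [hb, psi, Module.Basis.constr_basis]
    simp only
    rw [smul_smul, Finset.smul_sum]
    refine Finset.sum_congr rfl fun g _ => ?_
    rw [smul_smul, hXa r]
    congr 1
    have hz2 : ζ ^ ((c.val:ℤ) * (r:ℤ)) * ζ ^ (-((r:ℕ):ℤ) * (g.val:ℤ))
        = ζ ^ (((c.val:ℤ) - (g.val:ℤ)) * (r:ℤ)) := by
      rw [← zpow_add₀ hne]; congr 1; ring
    linear_combination ((d:ℂ)⁻¹) * hz2
  rw [Finset.sum_congr rfl fun r _ => step1 r, Finset.sum_comm]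
  have step2 : ∀ g : ZMod d,
      (∑ r : Fin d, ((d:ℂ)⁻¹ * ζ ^ (((c.val:ℤ) - (g.val:ℤ)) * (r:ℤ))) • S.b a b g)
      = (if g = c then (1:ℂ) else 0) • S.b a b g := by
    intro g
    rw [← Finset.sum_smul]
    congr 1
    rw [← Finset.mul_sum, ortho d ζ hζ]
    by_cases h : (d:ℤ) ∣ ((c.val:ℤ) - (g.val:ℤ))
    · rw [if_pos h, if_pos ((dvd_iff_eq d).mp h), inv_mul_cancel₀ hdC]
    · rw [if_neg h, if_neg (fun hc => h ((dvd_iff_eq d).mpr hc)), mul_zero]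
  rw [Finset.sum_congr rfl fun g _ => step2 g]
  simp [ite_smul]


lemma phi_bM (hζ : IsPrimitiveRoot ζ d) (S : SkewLaurent2Algebra d ζ A)
    (i j : Fin d) (m n : ℤ) :
    phi d ζ S (psi d ζ S (bM d (i, j, (m, n)))) = bM d (i, j, (m, n)) := by
  have hne : ζ ≠ 0 := hζ.ne_zero (NeZero.ne d)
  have hdC : (d : ℂ) ≠ 0 := Nat.cast_ne_zero.mpr (NeZero.ne d)
  rw [psi, Module.Basis.constr_basis]
  simp only
  rw [map_smul, map_sum]
  set a' : ℤ := ((i:ℕ):ℤ) - ((j:ℕ):ℤ) + d * n + m with ha'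
  have step1 : ∀ cc : ZMod d,
      phi d ζ S (ζ ^ (-((j:ℕ):ℤ) * (cc.val:ℤ)) • S.b a' m cc)
        = ∑ r : Fin d, (ζ ^ ((((r:ℕ):ℤ) - ((j:ℕ):ℤ)) * (cc.val:ℤ))) •
            Matrix.single (fm d (a' - m + ((r:ℕ):ℤ))) r (bR (m, fq d (a' - m + ((r:ℕ):ℤ)))) := by
    intro cc
    rw [map_smul, ← S.basis_eq, phi, Module.Basis.constr_basis]
    simp only
    rw [Mat, Finset.smul_sum]
    refine Finset.sum_congr rfl fun r _ => ?_
    rw [smul_smul]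
    congr 1
    rw [← zpow_add₀ hne]
    congr 1
    ring
  rw [Finset.sum_congr rfl fun cc _ => step1 cc, Finset.sum_comm]
  have step2 : ∀ r : Fin d,
      (∑ cc : ZMod d, (ζ ^ ((((r:ℕ):ℤ) - ((j:ℕ):ℤ)) * (cc.val:ℤ))) •
          Matrix.single (fm d (a' - m + ((r:ℕ):ℤ))) r (bR (m, fq d (a' - m + ((r:ℕ):ℤ)))))
      = (if (d:ℤ) ∣ (((r:ℕ):ℤ) - ((j:ℕ):ℤ)) then (d:ℂ) else 0) •
          Matrix.single (fm d (a' - m + ((r:ℕ):ℤ))) r (bR (m, fq d (a' - m + ((r:ℕ):ℤ)))) := by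
    intro r
    rw [← Finset.sum_smul, orthoZ d ζ hζ]
  rw [Finset.sum_congr rfl fun r _ => step2 r]
  rw [Finset.sum_eq_single j]
  · rw [if_pos (by rw [sub_self]; exact dvd_zero _)]
    have harg : a' - m + ((j:ℕ):ℤ) = ((i:ℕ):ℤ) + d * n := by rw [ha']; ring
    rw [harg, fm_fin_add, fq_fin_add, smul_smul, inv_mul_cancel₀ hdC, one_smul, bM,
      Module.Basis.matrix_apply]
  · intro r _ hr
    rw [if_neg, zero_smul]
    intro hdvd
    have h0 : ((r:ℕ):ℤ) - ((j:ℕ):ℤ) = 0 :=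
      Int.eq_zero_of_abs_lt_dvd hdvd (by have := r.isLt; have := j.isLt; rw [abs_lt]; omega)
    exact hr (Fin.ext (by omega))
  · intro h; exact absurd (Finset.mem_univ _) h

end Stmt10Aux
end

open Stmt10Aux

theorem stmt_10 (d : ℕ) (hd : 0 < d) (ζ : ℂ) (hζ : IsPrimitiveRoot ζ d)
    (A : Type) [Ring A] [Algebra ℂ A] (S : SkewLaurent2Algebra d ζ A) :
    Nonempty (A ≃ₐ[ℂ] Matrix (Fin d) (Fin d) (LaurentPolynomial (LaurentPolynomial ℂ))) := by
  haveI : NeZero d := ⟨hd.ne'⟩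
  set φ := phi d ζ S with hφ
  set ψ := psi d ζ S with hψ
  have hphib : ∀ (a b : ℤ) (c : ZMod d), φ (S.b a b c) = Mat d ζ a b c := by
    intro a b c
    rw [← S.basis_eq, hφ, phi, Module.Basis.constr_basis]
  have h1 : ψ.comp φ = LinearMap.id := by
    apply Module.Basis.ext S.basis
    rintro ⟨a, b, c⟩
    rw [LinearMap.comp_apply, LinearMap.id_apply, S.basis_eq, hphib, hψ,
      psi_Mat d ζ hζ S]
  have h2 : φ.comp ψ = LinearMap.id := by
    apply Module.Basis.ext (bM d)
    rintro ⟨i, j, m, n⟩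
    rw [LinearMap.comp_apply, LinearMap.id_apply]
    exact phi_bM d ζ hζ S i j m n
  let e : A ≃ₗ[ℂ] Matrix (Fin d) (Fin d) Rr := LinearEquiv.ofLinear φ ψ h2 h1
  have hone : e 1 = 1 := by
    show φ 1 = 1
    rw [← S.b_one, hphib, Mat_one]
  have hbasismul : ∀ p q : ℤ × ℤ × ZMod d,
      φ (S.basis p * S.basis q) = φ (S.basis p) * φ (S.basis q) := by
    rintro ⟨a, b, c⟩ ⟨e', f, g⟩
    rw [S.basis_eq, S.basis_eq, S.b_mul, map_smul, hphib, hphib, hphib,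
      Mat_mul d ζ hζ]
  have hmul : ∀ x y : A, e (x * y) = e x * e y := by
    have step1 : ∀ p (y : A), φ (S.basis p * y) = φ (S.basis p) * φ y := by
      intro p
      have hc : φ.comp (LinearMap.mulLeft ℂ (S.basis p))
          = (LinearMap.mulLeft ℂ (φ (S.basis p))).comp φ := by
        apply Module.Basis.ext S.basis
        intro q
        simp only [LinearMap.comp_apply, LinearMap.mulLeft_apply]
        exact hbasismul p q
      intro y
      exact DFunLike.congr_fun hc y
    intro x y
    show φ (x * y) = φ x * φ y
    have hc : φ.comp (LinearMap.mulRight ℂ y)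
        = (LinearMap.mulRight ℂ (φ y)).comp φ := by
      apply Module.Basis.ext S.basis
      intro p
      simp only [LinearMap.comp_apply, LinearMap.mulRight_apply]
      exact step1 p y
    exact DFunLike.congr_fun hc x
  exact ⟨AlgEquiv.ofLinearEquiv e hone hmul⟩
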